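/- Let C ∈ ℝ^{n×K} and L(π) = −∑_{i=1}^n log(∑_j π_j exp(−C_{ij})). Then min over π ∈ Δ_K of (1/n)L(π) equals min over π ∈ Δ_K of OT₁((1/n)1_n, π, C), where OT₁(a,b,C) = min_{P ∈ U(a,b)} ⟨C,P⟩ + KL(P | a bᵀ). -/

import Mathlib

open Real Finset

private lemma log_le_aux {p q c : ℝ} (hp : 0 < p) (hq : 0 < q) (hc : 0 < c) :
    p * Real.log c ≤ p * Real.log (p / q) + (c * q - p) := by
  have h1 : Real.log (c * q / p) ≤ c * q / p - 1 :=
    Real.log_le_sub_one_of_pos (by positivity)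
  have h2 : Real.log (c * q / p) = Real.log c - Real.log (p / q) := by
    rw [Real.log_div (by positivity) hp.ne', Real.log_mul hc.ne' hq.ne',
        Real.log_div hp.ne' hq.ne']
    ring
  have h3 : p * (Real.log c - Real.log (p / q)) ≤ p * (c * q / p - 1) := by
    rw [← h2]; exact mul_le_mul_of_nonneg_left h1 hp.le
  have h4 : p * (c * q / p - 1) = c * q - p := by field_simp
  rw [mul_sub, h4] at h3; linarith

private lemma row_lb {K : ℕ} (p q : Fin K → ℝ) (hp : ∀ j, 0 ≤ p j)
    (hq : ∀ j, 0 ≤ q j) (hpq : ∀ j, q j = 0 → p j = 0)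
    (hs : 0 < ∑ j, p j) (ht : 0 < ∑ j, q j) :
    (∑ j, p j) * Real.log ((∑ j, p j) / (∑ j, q j)) ≤
      ∑ j, p j * Real.log (p j / q j) := by
  set s := ∑ j, p j with hsdef
  set t := ∑ j, q j with htdef
  have hc : 0 < s / t := div_pos hs ht
  have key : ∀ j, p j * Real.log (s / t) ≤
      p j * Real.log (p j / q j) + ((s / t) * q j - p j) := by
    intro j
    rcases eq_or_lt_of_le (hp j) with h0 | h0
    · rw [← h0]; simp only [zero_mul, zero_add, sub_zero]; exact mul_nonneg hc.le (hq j)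
    · have hqj : 0 < q j := by
        rcases eq_or_lt_of_le (hq j) with h1 | h1
        · exact absurd (hpq j h1.symm) (by linarith)
        · exact h1
      exact log_le_aux h0 hqj hc
  have hsum := Finset.sum_le_sum (fun j (_ : j ∈ Finset.univ) => key j)
  have e1 : ∑ j, p j * Real.log (s / t) = s * Real.log (s / t) := by
    rw [← Finset.sum_mul]
  have e2 : ∑ j, (p j * Real.log (p j / q j) + ((s / t) * q j - p j)) =
      (∑ j, p j * Real.log (p j / q j)) + ((s / t) * t - s) := by
    rw [Finset.sum_add_distrib, Finset.sum_sub_distrib, ← Finset.mul_sum]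
  have e3 : (s / t) * t - s = 0 := by field_simp; ring
  rw [e1, e2, e3, add_zero] at hsum
  exact hsum

section
variable {n K : ℕ}

private lemma zpos (hn : 0 < n) (C : Fin n → Fin K → ℝ) (w : Fin K → ℝ)
    (hw0 : ∀ j, 0 ≤ w j) (hw1 : ∑ j, w j = 1) (i : Fin n) :
    0 < ∑ j, w j * Real.exp (-C i j) := by
  obtain ⟨j0, hj0⟩ : ∃ j, 0 < w j := by
    by_contra h
    push_neg at h
    have : ∑ j, w j = 0 :=
      Finset.sum_eq_zero (fun j _ => le_antisymm (h j) (hw0 j))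
    rw [this] at hw1; norm_num at hw1
  have h1 : w j0 * Real.exp (-C i j0) ≤ ∑ j, w j * Real.exp (-C i j) :=
    Finset.single_le_sum (f := fun j => w j * Real.exp (-C i j))
      (fun j _ => mul_nonneg (hw0 j) (Real.exp_pos _).le) (Finset.mem_univ j0)
  have h2 : 0 < w j0 * Real.exp (-C i j0) := mul_pos hj0 (Real.exp_pos _)
  linarith

private lemma D1 (hn : 0 < n) (C : Fin n → Fin K → ℝ)
    (w : Fin K → ℝ) (P : Fin n → Fin K → ℝ)
    (hw0 : ∀ j, 0 ≤ w j) (hw1 : ∑ j, w j = 1)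
    (hP0 : ∀ i j, 0 ≤ P i j) (hProw : ∀ i, ∑ j, P i j = 1 / (n : ℝ))
    (hPcol : ∀ j, ∑ i, P i j = w j) :
    (1 / (n : ℝ)) * (-∑ i, Real.log (∑ j, w j * Real.exp (-C i j))) ≤
      (∑ i, ∑ j, C i j * P i j) +
        ∑ i, ∑ j, P i j * Real.log (P i j / ((1 / (n : ℝ)) * w j)) := by
  have hn' : (0 : ℝ) < n := Nat.cast_pos.mpr hn
  have hZ : ∀ i, 0 < ∑ j, w j * Real.exp (-C i j) := zpos hn C w hw0 hw1
  -- pointwise identity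
  have hid : ∀ i j, C i j * P i j + P i j * Real.log (P i j / ((1 / (n:ℝ)) * w j)) =
      P i j * Real.log (P i j / ((1 / (n:ℝ)) * w j * Real.exp (-C i j))) := by
    intro i j
    rcases eq_or_lt_of_le (hP0 i j) with h0 | h0
    · rw [← h0]; ring
    · have hwj : 0 < w j := by
        have := Finset.single_le_sum (fun i (_ : i ∈ Finset.univ) => hP0 i j)
          (Finset.mem_univ i)
        rw [hPcol j] at this; linarith
      have ha : (0 : ℝ) < (1 / (n:ℝ)) * w j := by positivity
      rw [Real.log_div h0.ne' (mul_ne_zero ha.ne' (Real.exp_ne_zero _)),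
          Real.log_mul ha.ne' (Real.exp_ne_zero _), Real.log_exp,
          Real.log_div h0.ne' ha.ne']
      ring
  -- per-row bound
  have hrow : ∀ i, -((1 / (n:ℝ)) * Real.log (∑ j, w j * Real.exp (-C i j))) ≤
      ∑ j, (C i j * P i j + P i j * Real.log (P i j / ((1 / (n:ℝ)) * w j))) := by
    intro i
    have hq0 : ∀ j, (0:ℝ) ≤ (1 / (n:ℝ)) * w j * Real.exp (-C i j) :=
      fun j => mul_nonneg (mul_nonneg (by positivity) (hw0 j)) (Real.exp_pos _).le
    have hqp : ∀ j, (1 / (n:ℝ)) * w j * Real.exp (-C i j) = 0 → P i j = 0 := by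
      intro j hj
      have hwj : w j = 0 := by
        rcases mul_eq_zero.mp hj with h | h
        · rcases mul_eq_zero.mp h with h' | h'
          · exfalso; revert h'; positivity
          · exact h'
        · exact absurd h (Real.exp_ne_zero _)
      have hs0 : ∑ i, P i j = 0 := by rw [hPcol j, hwj]
      have := (Finset.sum_eq_zero_iff_of_nonneg
        (fun i (_ : i ∈ Finset.univ) => hP0 i j)).mp hs0
      exact this i (Finset.mem_univ i)
    have hsp : 0 < ∑ j, P i j := by rw [hProw i]; positivity
    have hqsum : ∑ j, (1 / (n:ℝ)) * w j * Real.exp (-C i j)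
        = (1 / (n:ℝ)) * ∑ j, w j * Real.exp (-C i j) := by
      rw [Finset.mul_sum]; exact Finset.sum_congr rfl (fun j _ => by ring)
    have htp : 0 < ∑ j, (1 / (n:ℝ)) * w j * Real.exp (-C i j) := by
      rw [hqsum]; exact mul_pos (by positivity) (hZ i)
    have key := row_lb (fun j => P i j) (fun j => (1 / (n:ℝ)) * w j * Real.exp (-C i j))
      (fun j => hP0 i j) hq0 hqp hsp htp
    rw [hProw i, hqsum] at key
    have hlog : (1 / (n:ℝ)) * Real.log ((1 / (n:ℝ)) /
        ((1 / (n:ℝ)) * ∑ j, w j * Real.exp (-C i j)))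
        = -((1 / (n:ℝ)) * Real.log (∑ j, w j * Real.exp (-C i j))) := by
      rw [show (1 / (n:ℝ)) / ((1 / (n:ℝ)) * ∑ j, w j * Real.exp (-C i j))
          = (∑ j, w j * Real.exp (-C i j))⁻¹ by
        field_simp]
      rw [Real.log_inv]; ring
    rw [hlog] at key
    calc -((1 / (n:ℝ)) * Real.log (∑ j, w j * Real.exp (-C i j)))
        ≤ ∑ j, P i j * Real.log (P i j / ((1 / (n:ℝ)) * w j * Real.exp (-C i j))) := key
      _ = ∑ j, (C i j * P i j + P i j * Real.log (P i j / ((1 / (n:ℝ)) * w j))) :=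
        (Finset.sum_congr rfl (fun j _ => (hid i j).symm))
  have hsum := Finset.sum_le_sum (fun i (_ : i ∈ Finset.univ) => hrow i)
  have e1 : ∑ i, -((1 / (n:ℝ)) * Real.log (∑ j, w j * Real.exp (-C i j)))
      = (1 / (n:ℝ)) * (-∑ i, Real.log (∑ j, w j * Real.exp (-C i j))) := by
    rw [mul_neg, Finset.mul_sum, ← Finset.sum_neg_distrib]
  have e2 : ∑ i, ∑ j, (C i j * P i j + P i j * Real.log (P i j / ((1 / (n:ℝ)) * w j)))
      = (∑ i, ∑ j, C i j * P i j) +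
        ∑ i, ∑ j, P i j * Real.log (P i j / ((1 / (n:ℝ)) * w j)) := by
    rw [← Finset.sum_add_distrib]
    exact Finset.sum_congr rfl (fun i _ => Finset.sum_add_distrib)
  rw [e1, e2] at hsum
  exact hsum

private lemma D2 {n K : ℕ} (hn : 0 < n) (C : Fin n → Fin K → ℝ)
    (w : Fin K → ℝ) (hw0 : ∀ j, 0 ≤ w j) (hw1 : ∑ j, w j = 1) :
    ∃ w' : Fin K → ℝ, ∃ P : Fin n → Fin K → ℝ,
      (∀ j, 0 ≤ w' j) ∧ (∑ j, w' j = 1) ∧ (∀ i j, 0 ≤ P i j) ∧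
      (∀ i, ∑ j, P i j = 1 / (n:ℝ)) ∧ (∀ j, ∑ i, P i j = w' j) ∧
      (∑ i, ∑ j, C i j * P i j) +
          (∑ i, ∑ j, P i j * Real.log (P i j / ((1 / (n:ℝ)) * w' j)))
        ≤ (1 / (n:ℝ)) * (-∑ i, Real.log (∑ j, w j * Real.exp (-C i j))) := by
  have hn' : (0 : ℝ) < n := Nat.cast_pos.mpr hn
  obtain ⟨Z, hZdef⟩ : ∃ Z : Fin n → ℝ, ∀ i, Z i = ∑ j, w j * Real.exp (-C i j) :=
    ⟨_, fun i => rfl⟩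
  have hZ : ∀ i, 0 < Z i := fun i => by rw [hZdef]; exact zpos hn C w hw0 hw1 i
  obtain ⟨P, hPdef⟩ : ∃ P : Fin n → Fin K → ℝ,
      ∀ i j, P i j = (1 / (n:ℝ)) * (w j * Real.exp (-C i j) / Z i) :=
    ⟨_, fun i j => rfl⟩
  obtain ⟨w', hw'def⟩ : ∃ w' : Fin K → ℝ, ∀ j, w' j = ∑ i, P i j :=
    ⟨_, fun j => rfl⟩
  have hP0 : ∀ i j, 0 ≤ P i j := fun i j => by
    rw [hPdef]
    have := hZ i
    have := hw0 j
    positivity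
  have hProw : ∀ i, ∑ j, P i j = 1 / (n:ℝ) := by
    intro i
    have : ∑ j, P i j = (1 / (n:ℝ)) * ((∑ j, w j * Real.exp (-C i j)) / Z i) := by
      rw [Finset.sum_div, Finset.mul_sum]
      exact Finset.sum_congr rfl (fun j _ => by rw [hPdef])
    rw [this, ← hZdef, div_self (hZ i).ne', mul_one]
  have hw'0 : ∀ j, 0 ≤ w' j := fun j => by
    rw [hw'def]; exact Finset.sum_nonneg (fun i _ => hP0 i j)
  have hw'1 : ∑ j, w' j = 1 := by
    have : ∑ j, w' j = ∑ j, ∑ i, P i j :=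
      Finset.sum_congr rfl (fun j _ => hw'def j)
    rw [this, Finset.sum_comm]
    simp only [hProw]
    rw [Finset.sum_const, Finset.card_univ, Fintype.card_fin, nsmul_eq_mul]
    field_simp
  have hw0P : ∀ j, w j = 0 → ∀ i, P i j = 0 := by
    intro j hj i
    rw [hPdef, hj]
    ring
  have hww' : ∀ j, w j = 0 → w' j = 0 := by
    intro j hj
    rw [hw'def]
    exact Finset.sum_eq_zero (fun i _ => hw0P j hj i)
  -- pointwise identity
  have hid : ∀ i j, C i j * P i j + P i j * Real.log (P i j / ((1 / (n:ℝ)) * w' j))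
      = -(P i j * Real.log (Z i)) + P i j * (Real.log (w j) - Real.log (w' j)) := by
    intro i j
    rcases eq_or_lt_of_le (hw0 j) with h0 | h0
    · rw [hw0P j h0.symm i]; ring
    · have hPij : 0 < P i j := by
        rw [hPdef]; have := hZ i; positivity
      have hw'j : 0 < w' j := by
        have h1 : P ⟨0, hn⟩ j ≤ ∑ i, P i j :=
          Finset.single_le_sum (f := fun i => P i j)
            (fun i _ => hP0 i j) (Finset.mem_univ (⟨0, hn⟩ : Fin n))
        have h2 : 0 < P ⟨0, hn⟩ j := by
          rw [hPdef]; have := hZ (⟨0, hn⟩ : Fin n); positivity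
        rw [hw'def]; linarith
      have ha : (0:ℝ) < (1 / (n:ℝ)) * w' j := by positivity
      have e1 : Real.log (P i j) = Real.log (1 / (n:ℝ)) +
          (Real.log (w j) + (-C i j) - Real.log (Z i)) := by
        rw [hPdef,
            Real.log_mul (by positivity) (by have := hZ i; positivity),
            Real.log_div (by have := hZ i; positivity) (hZ i).ne',
            Real.log_mul h0.ne' (Real.exp_ne_zero _), Real.log_exp]
      have e2 : Real.log ((1 / (n:ℝ)) * w' j)
          = Real.log (1 / (n:ℝ)) + Real.log (w' j) :=
        Real.log_mul (by positivity) hw'j.ne'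
      rw [Real.log_div hPij.ne' ha.ne', e1, e2]
      ring
  refine ⟨w', P, hw'0, hw'1, hP0, hProw, fun j => (hw'def j).symm, ?_⟩
  have step1 : (∑ i, ∑ j, C i j * P i j) +
      (∑ i, ∑ j, P i j * Real.log (P i j / ((1 / (n:ℝ)) * w' j)))
      = (∑ i, ∑ j, -(P i j * Real.log (Z i))) +
        ∑ i, ∑ j, P i j * (Real.log (w j) - Real.log (w' j)) := by
    rw [← Finset.sum_add_distrib, ← Finset.sum_add_distrib]
    refine Finset.sum_congr rfl (fun i _ => ?_)
    rw [← Finset.sum_add_distrib, ← Finset.sum_add_distrib]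
    exact Finset.sum_congr rfl (fun j _ => hid i j)
  have stepA : (∑ i, ∑ j, -(P i j * Real.log (Z i)))
      = (1 / (n:ℝ)) * (-∑ i, Real.log (∑ j, w j * Real.exp (-C i j))) := by
    rw [mul_neg, Finset.mul_sum, ← Finset.sum_neg_distrib]
    refine Finset.sum_congr rfl (fun i _ => ?_)
    rw [← hZdef i]
    rw [show ∑ j, -(P i j * Real.log (Z i)) = -((∑ j, P i j) * Real.log (Z i)) by
      rw [Finset.sum_mul, Finset.sum_neg_distrib]]
    rw [hProw i]
  have stepB : (∑ i, ∑ j, P i j * (Real.log (w j) - Real.log (w' j))) ≤ 0 := by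
    rw [Finset.sum_comm]
    have e : ∀ j, ∑ i, P i j * (Real.log (w j) - Real.log (w' j))
        = -(w' j * Real.log (w' j / w j)) := by
      intro j
      rw [← Finset.sum_mul, ← hw'def j]
      rcases eq_or_lt_of_le (hw'0 j) with h0 | h0
      · rw [← h0]; ring
      · have hwj : 0 < w j := by
          rcases eq_or_lt_of_le (hw0 j) with h1 | h1
          · exact absurd (hww' j h1.symm) (by linarith)
          · exact h1
        rw [Real.log_div h0.ne' hwj.ne']
        ring
    rw [Finset.sum_congr rfl (fun j _ => e j), Finset.sum_neg_distrib]
    have key := row_lb w' w hw'0 hw0 (fun j hj => hww' j hj) (by rw [hw'1]; norm_num)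
      (by rw [hw1]; norm_num)
    rw [hw'1, hw1] at key
    simp only [div_one, Real.log_one, one_mul] at key
    linarith
  rw [step1, stepA]
  linarith
private lemma lb1 {n K : ℕ} (hn : 0 < n) (C : Fin n → Fin K → ℝ)
    (w : Fin K → ℝ) (hw0 : ∀ j, 0 ≤ w j) (hw1 : ∑ j, w j = 1) :
    (1 / (n:ℝ)) * (-∑ i, Real.log (∑ j, Real.exp (-C i j))) ≤
      (1 / (n:ℝ)) * (-∑ i, Real.log (∑ j, w j * Real.exp (-C i j))) := by
  have hn' : (0 : ℝ) < n := Nat.cast_pos.mpr hn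
  apply mul_le_mul_of_nonneg_left _ (by positivity)
  apply neg_le_neg
  apply Finset.sum_le_sum
  intro i _
  have hZ := zpos hn C w hw0 hw1 i
  have hle : (∑ j, w j * Real.exp (-C i j)) ≤ ∑ j, Real.exp (-C i j) := by
    apply Finset.sum_le_sum
    intro j _
    have h1 : w j ≤ 1 := by
      rw [← hw1]
      exact Finset.single_le_sum (f := w) (fun j _ => hw0 j) (Finset.mem_univ j)
    calc w j * Real.exp (-C i j) ≤ 1 * Real.exp (-C i j) :=
          mul_le_mul_of_nonneg_right h1 (Real.exp_pos _).le
      _ = Real.exp (-C i j) := one_mul _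
  exact Real.log_le_log hZ hle

end

/-- Maximum-likelihood estimation of the mixture weights is equivalent to
minimizing entropic OT over the second marginal. -/
theorem min_nll_eq_min_eot (n K : ℕ) (hn : 0 < n) (hK : 0 < K)
    (C : Fin n → Fin K → ℝ) :
    sInf {x : ℝ | ∃ w : Fin K → ℝ, (∀ j, 0 ≤ w j) ∧ (∑ j, w j = 1) ∧
        x = (1 / n) * (-∑ i, Real.log (∑ j, w j * Real.exp (-C i j)))} =
    sInf {x : ℝ | ∃ w : Fin K → ℝ, ∃ P : Fin n → Fin K → ℝ,
        (∀ j, 0 ≤ w j) ∧ (∑ j, w j = 1) ∧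
        (∀ i j, 0 ≤ P i j) ∧ (∀ i, ∑ j, P i j = 1 / n) ∧ (∀ j, ∑ i, P i j = w j) ∧
        x = (∑ i, ∑ j, C i j * P i j) +
            ∑ i, ∑ j, P i j * Real.log (P i j / ((1 / n) * w j))} := by
  have hn' : (0 : ℝ) < n := Nat.cast_pos.mpr hn
  have hK' : (0 : ℝ) < K := Nat.cast_pos.mpr hK
  -- uniform weights
  have hu0 : ∀ j : Fin K, (0:ℝ) ≤ 1 / (K:ℝ) := fun _ => by positivity
  have hu1 : ∑ _j : Fin K, (1 / (K:ℝ)) = 1 := by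
    rw [Finset.sum_const, Finset.card_univ, Fintype.card_fin, nsmul_eq_mul]
    field_simp
  have ne1 : Set.Nonempty {x : ℝ | ∃ w : Fin K → ℝ, (∀ j, 0 ≤ w j) ∧ (∑ j, w j = 1) ∧
      x = (1 / n) * (-∑ i, Real.log (∑ j, w j * Real.exp (-C i j)))} :=
    ⟨_, ⟨fun _ => 1 / (K:ℝ), hu0, hu1, rfl⟩⟩
  obtain ⟨wu', Pu, hb1, hb2, hb3, hb4, hb5, _⟩ :=
    D2 hn C (fun _ => 1 / (K:ℝ)) hu0 hu1
  have ne2 : Set.Nonempty {x : ℝ | ∃ w : Fin K → ℝ, ∃ P : Fin n → Fin K → ℝ,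
      (∀ j, 0 ≤ w j) ∧ (∑ j, w j = 1) ∧
      (∀ i j, 0 ≤ P i j) ∧ (∀ i, ∑ j, P i j = 1 / n) ∧ (∀ j, ∑ i, P i j = w j) ∧
      x = (∑ i, ∑ j, C i j * P i j) +
          ∑ i, ∑ j, P i j * Real.log (P i j / ((1 / n) * w j))} :=
    ⟨_, ⟨wu', Pu, hb1, hb2, hb3, hb4, hb5, rfl⟩⟩
  have bdd1 : BddBelow {x : ℝ | ∃ w : Fin K → ℝ, (∀ j, 0 ≤ w j) ∧ (∑ j, w j = 1) ∧
      x = (1 / n) * (-∑ i, Real.log (∑ j, w j * Real.exp (-C i j)))} := by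
    refine ⟨(1 / (n:ℝ)) * (-∑ i, Real.log (∑ j, Real.exp (-C i j))), ?_⟩
    rintro x ⟨w, h0, h1, rfl⟩
    exact lb1 hn C w h0 h1
  have bdd2 : BddBelow {x : ℝ | ∃ w : Fin K → ℝ, ∃ P : Fin n → Fin K → ℝ,
      (∀ j, 0 ≤ w j) ∧ (∑ j, w j = 1) ∧
      (∀ i j, 0 ≤ P i j) ∧ (∀ i, ∑ j, P i j = 1 / n) ∧ (∀ j, ∑ i, P i j = w j) ∧
      x = (∑ i, ∑ j, C i j * P i j) +
          ∑ i, ∑ j, P i j * Real.log (P i j / ((1 / n) * w j))} := by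
    refine ⟨(1 / (n:ℝ)) * (-∑ i, Real.log (∑ j, Real.exp (-C i j))), ?_⟩
    rintro x ⟨w, P, h0, h1, hP0, hrow, hcol, rfl⟩
    exact le_trans (lb1 hn C w h0 h1) (D1 hn C w P h0 h1 hP0 hrow hcol)
  apply le_antisymm
  · refine le_csInf ne2 ?_
    rintro x ⟨w, P, h0, h1, hP0, hrow, hcol, rfl⟩
    refine le_trans (csInf_le bdd1 ⟨w, h0, h1, rfl⟩) ?_
    exact D1 hn C w P h0 h1 hP0 hrow hcol
  · refine le_csInf ne1 ?_
    rintro x ⟨w, h0, h1, rfl⟩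
    obtain ⟨w', P, a1, a2, a3, a4, a5, a6⟩ := D2 hn C w h0 h1
    exact le_trans (csInf_le bdd2 ⟨w', P, a1, a2, a3, a4, a5, rfl⟩) a6
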